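/- For p > 1, α > 0, β > 0 with α ≠ β, and ζᵢ, ζⱼ ∈ ℝ with dᵢ = -tanh ζᵢ, dⱼ = -tanh ζⱼ, the integral I₁ = ∫_{-1}^{1} κ(dⱼ,y)^α κ(dᵢ,y)^β (1-y²)^{(α+β)/(p-1) - 1} dy satisfies I₁ ≤ C e^{-(2/(p-1)) min(α,β) |ζᵢ - ζⱼ|} for some constant C = C(p,α,β) independent of ζᵢ, ζⱼ. -/

import Mathlib

noncomputable def kappa0 (p : ℝ) : ℝ := (2 * (p + 1) / (p - 1) ^ 2) ^ (1 / (p - 1))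

noncomputable def kap (p d y : ℝ) : ℝ :=
  kappa0 p * (1 - d ^ 2) ^ (1 / (p - 1)) / (1 + d * y) ^ (2 / (p - 1))

namespace SIB
open Real MeasureTheory Set intervalIntegral

lemma one_add_tanh (z : ℝ) : 1 + Real.tanh z = Real.exp z / Real.cosh z := by
  rw [Real.tanh_eq_sinh_div_cosh, ← Real.cosh_add_sinh]
  field_simp

lemma one_sub_tanh (z : ℝ) : 1 - Real.tanh z = Real.exp (-z) / Real.cosh z := by
  rw [Real.tanh_eq_sinh_div_cosh, ← Real.cosh_sub_sinh]
  field_simp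

lemma tanh_lt_one' (z : ℝ) : Real.tanh z < 1 := by
  have h : 0 < 1 - Real.tanh z := by
    rw [one_sub_tanh]; positivity
  linarith

lemma neg_one_lt_tanh' (z : ℝ) : -1 < Real.tanh z := by
  have h : 0 < 1 + Real.tanh z := by
    rw [one_add_tanh]; positivity
  linarith

lemma kappa0_pos (p : ℝ) (hp : 1 < p) : 0 < kappa0 p := by
  have h1 : 0 < 2 * (p + 1) := by linarith
  have h2 : 0 < (p - 1) ^ 2 := by nlinarith
  exact Real.rpow_pos_of_pos (by positivity) _

lemma G_le_r (d y : ℝ) (hd1 : -1 < d) (hd2 : d < 1) (hy1 : -1 < y) (hy2 : y < 1) :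
    (1-d^2)*(1-y^2)/(1+d*y)^2 ≤ 4*((1-y)*(1-d))/((1+y)*(1+d)) := by
  have hB : 0 < 1 + d*y := by nlinarith
  have hy : 0 < 1 + y := by linarith
  have hd : 0 < 1 + d := by linarith
  have h1 : 0 < (1+y)*(1+d) := by positivity
  rw [div_le_div_iff₀ (by positivity) h1]
  nlinarith [mul_nonneg (sq_nonneg ((1-d)*(1-y))) (by nlinarith : (0:ℝ) ≤ 2*(1+d*y)+(1+d)*(1+y))]

lemma G_le_rinv (d y : ℝ) (hd1 : -1 < d) (hd2 : d < 1) (hy1 : -1 < y) (hy2 : y < 1) :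
    (1-d^2)*(1-y^2)/(1+d*y)^2 ≤ 4*((1+y)*(1+d))/((1-y)*(1-d)) := by
  have hB : 0 < 1 + d*y := by nlinarith
  have hy : 0 < 1 - y := by linarith
  have hd : 0 < 1 - d := by linarith
  have h1 : 0 < (1-y)*(1-d) := by positivity
  rw [div_le_div_iff₀ (by positivity) h1]
  nlinarith [mul_nonneg (sq_nonneg ((1+d)*(1+y))) (by nlinarith : (0:ℝ) ≤ 2*(1+d*y)+(1-d)*(1-y))]

lemma flat (κ Aj Ai Bj Bi Y q a b : ℝ) (hκ : 0 < κ) (hAj : 0 < Aj) (hAi : 0 < Ai)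
    (hBj : 0 < Bj) (hBi : 0 < Bi) (hY : 0 < Y) :
    (κ * Aj^(1/q) / Bj^(2/q))^a * (κ * Ai^(1/q) / Bi^(2/q))^b * Y^((a+b)/q - 1)
      = κ^(a+b) * ((Aj*Y/Bj^2) * (Ai*Y/Bi^2))^(a/q) * ((Ai*Y/Bi^2)^((b-a)/q) * Y⁻¹) := by
  have pXj : (0:ℝ) < κ * Aj^(1/q) / Bj^(2/q) := by positivity
  have pXi : (0:ℝ) < κ * Ai^(1/q) / Bi^(2/q) := by positivity
  have pGj : (0:ℝ) < Aj*Y/Bj^2 := by positivity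
  have pGi : (0:ℝ) < Ai*Y/Bi^2 := by positivity
  have pXja : (0:ℝ) < (κ * Aj^(1/q) / Bj^(2/q))^a := rpow_pos_of_pos pXj _
  have pXib : (0:ℝ) < (κ * Ai^(1/q) / Bi^(2/q))^b := rpow_pos_of_pos pXi _
  have hL : (0:ℝ) < (κ * Aj^(1/q) / Bj^(2/q))^a * (κ * Ai^(1/q) / Bi^(2/q))^b * Y^((a+b)/q - 1) := by positivity
  have hR : (0:ℝ) < κ^(a+b) * ((Aj*Y/Bj^2) * (Ai*Y/Bi^2))^(a/q) * ((Ai*Y/Bi^2)^((b-a)/q) * Y⁻¹) := by positivity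
  rw [← Real.exp_log hL, ← Real.exp_log hR]
  congr 1
  have l1 : Real.log ((κ * Aj^(1/q) / Bj^(2/q))^a) = a * (Real.log κ + (1/q)*Real.log Aj - (2/q)*Real.log Bj) := by
    rw [Real.log_rpow pXj, Real.log_div (by positivity : (0:ℝ) < κ * Aj^(1/q)).ne' (rpow_pos_of_pos hBj _).ne',
      Real.log_mul hκ.ne' (rpow_pos_of_pos hAj _).ne', Real.log_rpow hAj, Real.log_rpow hBj]
  have l2 : Real.log ((κ * Ai^(1/q) / Bi^(2/q))^b) = b * (Real.log κ + (1/q)*Real.log Ai - (2/q)*Real.log Bi) := by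
    rw [Real.log_rpow pXi, Real.log_div (by positivity : (0:ℝ) < κ * Ai^(1/q)).ne' (rpow_pos_of_pos hBi _).ne',
      Real.log_mul hκ.ne' (rpow_pos_of_pos hAi _).ne', Real.log_rpow hAi, Real.log_rpow hBi]
  have gj : Real.log (Aj*Y/Bj^2) = Real.log Aj + Real.log Y - 2*Real.log Bj := by
    rw [Real.log_div (by positivity : (0:ℝ) < Aj*Y).ne' (by positivity : (0:ℝ) < Bj^2).ne',
      Real.log_mul hAj.ne' hY.ne', Real.log_pow]
    norm_num
  have gi : Real.log (Ai*Y/Bi^2) = Real.log Ai + Real.log Y - 2*Real.log Bi := by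
    rw [Real.log_div (by positivity : (0:ℝ) < Ai*Y).ne' (by positivity : (0:ℝ) < Bi^2).ne',
      Real.log_mul hAi.ne' hY.ne', Real.log_pow]
    norm_num
  rw [Real.log_mul (by positivity : (0:ℝ) < _*_).ne' (rpow_pos_of_pos hY _).ne',
    Real.log_mul pXja.ne' pXib.ne', l1, l2, Real.log_rpow hY,
    Real.log_mul (by positivity : (0:ℝ) < κ^(a+b) * _).ne'
      (by positivity : (0:ℝ) < (Ai*Y/Bi^2)^((b-a)/q) * Y⁻¹).ne',
    Real.log_mul (rpow_pos_of_pos hκ _).ne' (rpow_pos_of_pos (mul_pos pGj pGi) _).ne',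
    Real.log_rpow hκ, Real.log_rpow (mul_pos pGj pGi),
    Real.log_mul pGj.ne' pGi.ne', gj, gi,
    Real.log_mul (rpow_pos_of_pos pGi _).ne' (by positivity : (0:ℝ) < Y⁻¹).ne',
    Real.log_rpow pGi, Real.log_inv, gi]
  ring

lemma phi_intable (d γ : ℝ) (hγ : 0 < γ) (hd1 : -1 < d) (hd2 : d < 1) :
    IntervalIntegrable (fun y : ℝ => (1-y)^(γ-1) * (1+y)^(-γ-1)) MeasureTheory.volume (-d) 1 := by
  have h1 : IntervalIntegrable (fun x : ℝ => x ^ (γ-1)) MeasureTheory.volume 0 (1+d) :=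
    intervalIntegral.intervalIntegrable_rpow' (by linarith)
  have h2 := (h1.comp_sub_left 1).symm
  rw [show (1:ℝ)-(1+d) = -d by ring, show (1:ℝ)-0 = 1 by ring] at h2
  apply h2.mul_continuousOn
  apply ContinuousOn.rpow_const (by fun_prop)
  intro x hx
  rw [Set.uIcc_of_le (by linarith : (-d:ℝ) ≤ 1)] at hx
  left
  have : 0 < 1 + x := by have := hx.1; linarith
  exact this.ne'

lemma phi_integral (d γ : ℝ) (hγ : 0 < γ) (hd1 : -1 < d) (hd2 : d < 1) :
    ∫ y in (-d)..1, (1-y)^(γ-1) * (1+y)^(-γ-1) = (1/(2*γ)) * ((1+d)/(1-d))^γ := by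
  have hab : (-d:ℝ) ≤ 1 := by linarith
  set F : ℝ → ℝ := fun y => -(1/(2*γ)) * ((1-y)/(1+y))^γ with hF
  have hcont : ContinuousOn F (Set.Icc (-d) 1) := by
    apply ContinuousOn.mul continuousOn_const
    apply ContinuousOn.rpow_const
    · apply ContinuousOn.div (by fun_prop) (by fun_prop)
      intro x hx
      have : 0 < 1 + x := by have := hx.1; linarith
      exact this.ne'
    · intro x _; right; exact hγ.le
  have hderiv : ∀ x ∈ Set.Ioo (-d) 1, HasDerivAt F ((1-x)^(γ-1) * (1+x)^(-γ-1)) x := by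
    intro x hx
    have hx1 : 0 < 1 - x := by linarith [hx.2]
    have hx2 : 0 < 1 + x := by have := hx.1; linarith
    have hu : HasDerivAt (fun y : ℝ => (1-y)/(1+y)) (-2/(1+x)^2) x := by
      have h1 : HasDerivAt (fun y : ℝ => 1 - y) (-1) x := by
        simpa using (hasDerivAt_id x).const_sub 1
      have h2 : HasDerivAt (fun y : ℝ => 1 + y) 1 x := by
        simpa using (hasDerivAt_id x).const_add 1
      have h3 := h1.div h2 hx2.ne'
      exact h3.congr_deriv (by ring)
    have hbase : (1-x)/(1+x) ≠ 0 := by positivity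
    have hr : HasDerivAt (fun y : ℝ => ((1-y)/(1+y))^γ)
        (γ * ((1-x)/(1+x))^(γ-1) * (-2/(1+x)^2)) x :=
      HasDerivAt.comp (h₂ := fun z : ℝ => z ^ γ) x (Real.hasDerivAt_rpow_const (Or.inl hbase)) hu
    have h4 := hr.const_mul (-(1/(2*γ)))
    refine h4.congr_deriv ?_
    symm
    rw [Real.div_rpow hx1.le hx2.le]
    rw [show (-γ-1 : ℝ) = -((γ-1)+2) by ring, Real.rpow_neg hx2.le, Real.rpow_add hx2,
      Real.rpow_two]
    field_simp
  have hint := phi_intable d γ hγ hd1 hd2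
  rw [intervalIntegral.integral_eq_sub_of_hasDerivAt_of_le hab hcont hderiv hint, hF]
  have e1 : ((1:ℝ)-1)/(1+1) = 0 := by norm_num
  simp only [e1, Real.zero_rpow hγ.ne']
  rw [show (1 : ℝ) - -d = 1 + d by ring, show (1 : ℝ) + -d = 1 - d by ring]
  ring

lemma phi_intable' (d γ : ℝ) (hγ : 0 < γ) (hd1 : -1 < d) (hd2 : d < 1) :
    IntervalIntegrable (fun y : ℝ => (1+y)^(γ-1) * (1-y)^(-γ-1)) MeasureTheory.volume (-1) (-d) := by
  have h := phi_intable (-d) γ hγ (by linarith) (by linarith)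
  rw [neg_neg] at h
  have h2 := ((IntervalIntegrable.iff_comp_neg).mp h).symm
  rw [show -(1:ℝ) = -1 by ring] at h2
  have : (fun x : ℝ => (1 - -x)^(γ-1) * (1 + -x)^(-γ-1))
      = (fun x : ℝ => (1+x)^(γ-1) * (1-x)^(-γ-1)) := by
    funext x
    rw [show (1:ℝ) - -x = 1 + x by ring, show (1:ℝ) + -x = 1 - x by ring]
  rwa [this] at h2

lemma phi_integral' (d γ : ℝ) (hγ : 0 < γ) (hd1 : -1 < d) (hd2 : d < 1) :
    ∫ y in (-1 : ℝ)..(-d), (1+y)^(γ-1) * (1-y)^(-γ-1) = (1/(2*γ)) * ((1-d)/(1+d))^γ := by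
  have h := phi_integral (-d) γ hγ (by linarith) (by linarith)
  rw [neg_neg, show (1:ℝ) + -d = 1 - d by ring, show (1:ℝ) - -d = 1 + d by ring] at h
  calc ∫ y in (-1 : ℝ)..(-d), (1+y)^(γ-1) * (1-y)^(-γ-1)
      = ∫ y in (-1 : ℝ)..(-d), (fun t : ℝ => (1-t)^(γ-1) * (1+t)^(-γ-1)) (-y) := by
        apply intervalIntegral.integral_congr
        intro x _
        simp only
        rw [show (1:ℝ) - -x = 1 + x by ring, show (1:ℝ) + -x = 1 - x by ring]
    _ = ∫ x in (-(-d) : ℝ)..(-(-1)), (fun t : ℝ => (1-t)^(γ-1) * (1+t)^(-γ-1)) x :=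
        intervalIntegral.integral_comp_neg (a := -1) (b := -d) (fun t : ℝ => (1-t)^(γ-1) * (1+t)^(-γ-1))
    _ = (1/(2*γ)) * ((1-d)/(1+d))^γ := by
        rw [neg_neg, neg_neg]
        simpa using h

lemma ratio (y ζj ζi : ℝ) (hy1 : -1 < y) (hy2 : y < 1) :
    4*((1-y)*(1-(-Real.tanh ζj)))/((1+y)*(1+(-Real.tanh ζj)))
      * (4*((1+y)*(1+(-Real.tanh ζi)))/((1-y)*(1-(-Real.tanh ζi))))
    = 16 * Real.exp (2*(ζj-ζi)) := by
  have hy3 : 0 < 1 - y := by linarith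
  have hy4 : 0 < 1 + y := by linarith
  rw [show (1:ℝ) - (-Real.tanh ζj) = 1 + Real.tanh ζj by ring,
    show (1:ℝ) + (-Real.tanh ζj) = 1 - Real.tanh ζj by ring,
    show (1:ℝ) - (-Real.tanh ζi) = 1 + Real.tanh ζi by ring,
    show (1:ℝ) + (-Real.tanh ζi) = 1 - Real.tanh ζi by ring,
    one_add_tanh, one_sub_tanh, one_add_tanh, one_sub_tanh,
    Real.exp_neg, Real.exp_neg,
    show 2*(ζj-ζi) = ζj+ζj-(ζi+ζi) by ring, Real.exp_sub, Real.exp_add, Real.exp_add]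
  have cj := Real.cosh_pos ζj
  have ci := Real.cosh_pos ζi
  have ej := Real.exp_pos ζj
  have ei := Real.exp_pos ζi
  field_simp
  ring

lemma step3 (d y γ : ℝ) (hγ : 0 < γ) (hd1 : -1 < d) (hd2 : d < 1) (hy1 : -1 < y) (hy2 : y < 1) :
    (4*((1-y)*(1-d))/((1+y)*(1+d)))^γ * (1-y^2)⁻¹
      = (4^γ * ((1-d)/(1+d))^γ) * ((1-y)^(γ-1)*(1+y)^(-γ-1)) := by
  have p1 : (0:ℝ) < 1 - y := by linarith
  have p2 : (0:ℝ) < 1 + y := by linarith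
  have p3 : (0:ℝ) < 1 - d := by linarith
  have p4 : (0:ℝ) < 1 + d := by linarith
  have pr : (0:ℝ) < 4*((1-y)*(1-d))/((1+y)*(1+d)) := by positivity
  have pY : (0:ℝ) < 1 - y^2 := by nlinarith
  have hL : (0:ℝ) < (4*((1-y)*(1-d))/((1+y)*(1+d)))^γ * (1-y^2)⁻¹ := by positivity
  have hR : (0:ℝ) < (4^γ * ((1-d)/(1+d))^γ) * ((1-y)^(γ-1)*(1+y)^(-γ-1)) := by positivity
  rw [← Real.exp_log hL, ← Real.exp_log hR]
  congr 1
  rw [Real.log_mul (rpow_pos_of_pos pr γ).ne' (inv_pos.2 pY).ne', Real.log_rpow pr,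
    Real.log_div (by positivity : (0:ℝ) < 4*((1-y)*(1-d))).ne' (by positivity : (0:ℝ) < (1+y)*(1+d)).ne',
    Real.log_mul (by norm_num : (4:ℝ) ≠ 0) (by positivity : (0:ℝ) < (1-y)*(1-d)).ne',
    Real.log_mul p1.ne' p3.ne', Real.log_mul p2.ne' p4.ne', Real.log_inv,
    show (1:ℝ) - y^2 = (1-y)*(1+y) by ring, Real.log_mul p1.ne' p2.ne',
    Real.log_mul (by positivity : (0:ℝ) < (4:ℝ)^γ * ((1-d)/(1+d))^γ).ne'
      (by positivity : (0:ℝ) < (1-y)^(γ-1)*(1+y)^(-γ-1)).ne',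
    Real.log_mul (rpow_pos_of_pos (by norm_num : (0:ℝ) < 4) γ).ne'
      (rpow_pos_of_pos (div_pos p3 p4) γ).ne',
    Real.log_rpow (by norm_num : (0:ℝ) < 4), Real.log_rpow (div_pos p3 p4),
    Real.log_div p3.ne' p4.ne',
    Real.log_mul (rpow_pos_of_pos p1 _).ne' (rpow_pos_of_pos p2 _).ne',
    Real.log_rpow p1, Real.log_rpow p2]
  ring

lemma step3' (d y γ : ℝ) (hγ : 0 < γ) (hd1 : -1 < d) (hd2 : d < 1) (hy1 : -1 < y) (hy2 : y < 1) :
    (4*((1+y)*(1+d))/((1-y)*(1-d)))^γ * (1-y^2)⁻¹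
      = (4^γ * ((1+d)/(1-d))^γ) * ((1+y)^(γ-1)*(1-y)^(-γ-1)) := by
  have p1 : (0:ℝ) < 1 - y := by linarith
  have p2 : (0:ℝ) < 1 + y := by linarith
  have p3 : (0:ℝ) < 1 - d := by linarith
  have p4 : (0:ℝ) < 1 + d := by linarith
  have pr : (0:ℝ) < 4*((1+y)*(1+d))/((1-y)*(1-d)) := by positivity
  have pY : (0:ℝ) < 1 - y^2 := by nlinarith
  have hL : (0:ℝ) < (4*((1+y)*(1+d))/((1-y)*(1-d)))^γ * (1-y^2)⁻¹ := by positivity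
  have hR : (0:ℝ) < (4^γ * ((1+d)/(1-d))^γ) * ((1+y)^(γ-1)*(1-y)^(-γ-1)) := by positivity
  rw [← Real.exp_log hL, ← Real.exp_log hR]
  congr 1
  rw [Real.log_mul (rpow_pos_of_pos pr γ).ne' (inv_pos.2 pY).ne', Real.log_rpow pr,
    Real.log_div (by positivity : (0:ℝ) < 4*((1+y)*(1+d))).ne' (by positivity : (0:ℝ) < (1-y)*(1-d)).ne',
    Real.log_mul (by norm_num : (4:ℝ) ≠ 0) (by positivity : (0:ℝ) < (1+y)*(1+d)).ne',
    Real.log_mul p2.ne' p4.ne', Real.log_mul p1.ne' p3.ne', Real.log_inv,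
    show (1:ℝ) - y^2 = (1-y)*(1+y) by ring, Real.log_mul p1.ne' p2.ne',
    Real.log_mul (by positivity : (0:ℝ) < (4:ℝ)^γ * ((1+d)/(1-d))^γ).ne'
      (by positivity : (0:ℝ) < (1+y)^(γ-1)*(1-y)^(-γ-1)).ne',
    Real.log_mul (rpow_pos_of_pos (by norm_num : (0:ℝ) < 4) γ).ne'
      (rpow_pos_of_pos (div_pos p4 p3) γ).ne',
    Real.log_rpow (by norm_num : (0:ℝ) < 4), Real.log_rpow (div_pos p4 p3),
    Real.log_div p4.ne' p3.ne',
    Real.log_mul (rpow_pos_of_pos p2 _).ne' (rpow_pos_of_pos p1 _).ne',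
    Real.log_rpow p2, Real.log_rpow p1]
  ring

end SIB


namespace SIB
open Real MeasureTheory Set intervalIntegral

lemma kap_pos (p d y : ℝ) (hp : 1 < p) (hd1 : -1 < d) (hd2 : d < 1)
    (hy1 : -1 ≤ y) (hy2 : y ≤ 1) : 0 < kap p d y := by
  have hκ : 0 < kappa0 p := kappa0_pos p hp
  have h1 : 0 < 1 - d^2 := by nlinarith
  have hda : |d| < 1 := abs_lt.mpr ⟨hd1, hd2⟩
  have hya : |y| ≤ 1 := abs_le.mpr ⟨hy1, hy2⟩
  have hdy : |d*y| < 1 := by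
    rw [abs_mul]
    nlinarith [abs_nonneg d, abs_nonneg y]
  have h2 : 0 < 1 + d*y := by linarith [(abs_lt.mp hdy).1]
  rw [kap]
  positivity

lemma pointwise_main (p α β ζi ζj y : ℝ) (hp : 1 < p) (hα : 0 < α) (hβ : 0 < β)
    (hy1 : -1 < y) (hy2 : y < 1) :
    kap p (-Real.tanh ζj) y ^ α * kap p (-Real.tanh ζi) y ^ β * (1-y^2)^((α+β)/(p-1)-1)
      ≤ (kappa0 p^(α+β) * 16^(α/(p-1)) * Real.exp (-(2/(p-1))*α*|ζi-ζj|)) *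
        (((1-(-Real.tanh ζi)^2) * (1-y^2) / (1+(-Real.tanh ζi)*y)^2)^((β-α)/(p-1)) * (1-y^2)⁻¹) := by
  have hq : (0:ℝ) < p - 1 := by linarith
  have hκ : 0 < kappa0 p := kappa0_pos p hp
  have hdj1 : (-1:ℝ) < -Real.tanh ζj := by have := tanh_lt_one' ζj; linarith
  have hdj2 : -Real.tanh ζj < 1 := by have := neg_one_lt_tanh' ζj; linarith
  have hdi1 : (-1:ℝ) < -Real.tanh ζi := by have := tanh_lt_one' ζi; linarith
  have hdi2 : -Real.tanh ζi < 1 := by have := neg_one_lt_tanh' ζi; linarith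
  have pAj : (0:ℝ) < 1 - (-Real.tanh ζj)^2 := by nlinarith
  have pAi : (0:ℝ) < 1 - (-Real.tanh ζi)^2 := by nlinarith
  have pBj : (0:ℝ) < 1 + (-Real.tanh ζj)*y := by nlinarith
  have pBi : (0:ℝ) < 1 + (-Real.tanh ζi)*y := by nlinarith
  have pY : (0:ℝ) < 1 - y^2 := by nlinarith
  simp only [kap]
  rw [flat (kappa0 p) (1 - (-Real.tanh ζj)^2) (1 - (-Real.tanh ζi)^2)
    (1 + (-Real.tanh ζj)*y) (1 + (-Real.tanh ζi)*y) (1-y^2) (p-1) α β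
    hκ pAj pAi pBj pBi pY]
  have pGj : (0:ℝ) < (1 - (-Real.tanh ζj)^2) * (1-y^2) / (1 + (-Real.tanh ζj)*y)^2 := by positivity
  have pGi : (0:ℝ) < (1 - (-Real.tanh ζi)^2) * (1-y^2) / (1 + (-Real.tanh ζi)*y)^2 := by positivity
  -- bound on the product Gj * Gi
  have hGG : ((1 - (-Real.tanh ζj)^2) * (1-y^2) / (1 + (-Real.tanh ζj)*y)^2)
        * ((1 - (-Real.tanh ζi)^2) * (1-y^2) / (1 + (-Real.tanh ζi)*y)^2)
      ≤ 16 * Real.exp (-(2*|ζi-ζj|)) := by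
    rcases le_total ζj ζi with h | h
    · have hL : |ζi - ζj| = ζi - ζj := abs_of_nonneg (by linarith)
      calc ((1 - (-Real.tanh ζj)^2) * (1-y^2) / (1 + (-Real.tanh ζj)*y)^2)
            * ((1 - (-Real.tanh ζi)^2) * (1-y^2) / (1 + (-Real.tanh ζi)*y)^2)
          ≤ (4*((1-y)*(1-(-Real.tanh ζj)))/((1+y)*(1+(-Real.tanh ζj))))
            * (4*((1+y)*(1+(-Real.tanh ζi)))/((1-y)*(1-(-Real.tanh ζi)))) := by
            apply mul_le_mul (G_le_r _ _ hdj1 hdj2 hy1 hy2) (G_le_rinv _ _ hdi1 hdi2 hy1 hy2)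
              pGi.le
            have h1 : (0:ℝ) < 1 - y := by linarith
            have h2 : (0:ℝ) < 1 + y := by linarith
            have h3 : (0:ℝ) < 1 - (-Real.tanh ζj) := by linarith
            have h4 : (0:ℝ) < 1 + (-Real.tanh ζj) := by linarith
            positivity
        _ = 16 * Real.exp (2*(ζj-ζi)) := ratio y ζj ζi hy1 hy2
        _ = 16 * Real.exp (-(2*|ζi-ζj|)) := by rw [hL]; congr 1; ring
    · have hL : |ζi - ζj| = ζj - ζi := by rw [abs_sub_comm]; exact abs_of_nonneg (by linarith)
      calc ((1 - (-Real.tanh ζj)^2) * (1-y^2) / (1 + (-Real.tanh ζj)*y)^2)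
            * ((1 - (-Real.tanh ζi)^2) * (1-y^2) / (1 + (-Real.tanh ζi)*y)^2)
          ≤ (4*((1+y)*(1+(-Real.tanh ζj)))/((1-y)*(1-(-Real.tanh ζj))))
            * (4*((1-y)*(1-(-Real.tanh ζi)))/((1+y)*(1+(-Real.tanh ζi)))) := by
            apply mul_le_mul (G_le_rinv _ _ hdj1 hdj2 hy1 hy2) (G_le_r _ _ hdi1 hdi2 hy1 hy2)
              pGi.le
            have h1 : (0:ℝ) < 1 - y := by linarith
            have h2 : (0:ℝ) < 1 + y := by linarith
            have h3 : (0:ℝ) < 1 - (-Real.tanh ζj) := by linarith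
            have h4 : (0:ℝ) < 1 + (-Real.tanh ζj) := by linarith
            positivity
        _ = 16 * Real.exp (2*(ζi-ζj)) := by
            rw [mul_comm]; exact ratio y ζi ζj hy1 hy2
        _ = 16 * Real.exp (-(2*|ζi-ζj|)) := by rw [hL]; congr 1; ring
  have h2 : (((1 - (-Real.tanh ζj)^2) * (1-y^2) / (1 + (-Real.tanh ζj)*y)^2)
        * ((1 - (-Real.tanh ζi)^2) * (1-y^2) / (1 + (-Real.tanh ζi)*y)^2))^(α/(p-1))
      ≤ 16^(α/(p-1)) * Real.exp (-(2/(p-1))*α*|ζi-ζj|) := by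
    calc (((1 - (-Real.tanh ζj)^2) * (1-y^2) / (1 + (-Real.tanh ζj)*y)^2)
          * ((1 - (-Real.tanh ζi)^2) * (1-y^2) / (1 + (-Real.tanh ζi)*y)^2))^(α/(p-1))
        ≤ (16 * Real.exp (-(2*|ζi-ζj|)))^(α/(p-1)) :=
          Real.rpow_le_rpow (by positivity) hGG (by positivity)
      _ = 16^(α/(p-1)) * (Real.exp (-(2*|ζi-ζj|)))^(α/(p-1)) :=
          Real.mul_rpow (by norm_num) (Real.exp_pos _).le
      _ = 16^(α/(p-1)) * Real.exp (-(2/(p-1))*α*|ζi-ζj|) := by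
          rw [← Real.exp_mul]; congr 1; ring
  calc kappa0 p^(α+β) * (((1 - (-Real.tanh ζj)^2) * (1-y^2) / (1 + (-Real.tanh ζj)*y)^2)
          * ((1 - (-Real.tanh ζi)^2) * (1-y^2) / (1 + (-Real.tanh ζi)*y)^2))^(α/(p-1))
        * (((1 - (-Real.tanh ζi)^2) * (1-y^2) / (1 + (-Real.tanh ζi)*y)^2)^((β-α)/(p-1)) * (1-y^2)⁻¹)
      ≤ kappa0 p^(α+β) * (16^(α/(p-1)) * Real.exp (-(2/(p-1))*α*|ζi-ζj|))
        * (((1 - (-Real.tanh ζi)^2) * (1-y^2) / (1 + (-Real.tanh ζi)*y)^2)^((β-α)/(p-1)) * (1-y^2)⁻¹) := by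
        apply mul_le_mul_of_nonneg_right _ (by positivity)
        exact mul_le_mul_of_nonneg_left h2 (Real.rpow_nonneg hκ.le _)
    _ = (kappa0 p^(α+β) * 16^(α/(p-1)) * Real.exp (-(2/(p-1))*α*|ζi-ζj|)) *
        (((1 - (-Real.tanh ζi)^2) * (1-y^2) / (1 + (-Real.tanh ζi)*y)^2)^((β-α)/(p-1)) * (1-y^2)⁻¹) := by
        ring

end SIB

namespace SIB
open Real MeasureTheory Set intervalIntegral

lemma piece_right (p α β ζi ζj : ℝ) (hp : 1 < p) (hα : 0 < α) (hβ : 0 < β) (hab : α < β) :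
    IntervalIntegrable (fun y : ℝ => kap p (-Real.tanh ζj) y ^ α * kap p (-Real.tanh ζi) y ^ β
        * (1 - y ^ 2) ^ ((α + β) / (p - 1) - 1)) MeasureTheory.volume (-(-Real.tanh ζi)) 1 ∧
    (∫ y in (-(-Real.tanh ζi) : ℝ)..1, kap p (-Real.tanh ζj) y ^ α * kap p (-Real.tanh ζi) y ^ β
        * (1 - y ^ 2) ^ ((α + β) / (p - 1) - 1))
      ≤ kappa0 p^(α+β) * 16^(α/(p-1)) * Real.exp (-(2/(p-1))*α*|ζi-ζj|)
          * 4^((β-α)/(p-1)) * (1/(2*((β-α)/(p-1)))) := by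
  have hq : (0:ℝ) < p - 1 := by linarith
  have hκ := kappa0_pos p hp
  have hγ : 0 < (β-α)/(p-1) := div_pos (by linarith) hq
  have hdj1 : (-1:ℝ) < -Real.tanh ζj := by have := tanh_lt_one' ζj; linarith
  have hdj2 : -Real.tanh ζj < 1 := by have := neg_one_lt_tanh' ζj; linarith
  have hdi1 : (-1:ℝ) < -Real.tanh ζi := by have := tanh_lt_one' ζi; linarith
  have hdi2 : -Real.tanh ζi < 1 := by have := neg_one_lt_tanh' ζi; linarith
  have pdi1 : (0:ℝ) < 1 - (-Real.tanh ζi) := by linarith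
  have pdi2 : (0:ℝ) < 1 + (-Real.tanh ζi) := by linarith
  have hm1 : (-1:ℝ) < -(-Real.tanh ζi) := by linarith
  have hm2 : (-(-Real.tanh ζi):ℝ) ≤ 1 := by linarith
  have hφ := phi_intable (-Real.tanh ζi) ((β-α)/(p-1)) hγ hdi1 hdi2
  set Cr : ℝ := kappa0 p^(α+β) * 16^(α/(p-1)) * Real.exp (-(2/(p-1))*α*|ζi-ζj|)
      * (4^((β-α)/(p-1)) * ((1-(-Real.tanh ζi))/(1+(-Real.tanh ζi)))^((β-α)/(p-1))) with hCr
  have hD0 : (0:ℝ) < kappa0 p^(α+β) * 16^(α/(p-1)) * Real.exp (-(2/(p-1))*α*|ζi-ζj|) :=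
    mul_pos (mul_pos (Real.rpow_pos_of_pos hκ _)
      (Real.rpow_pos_of_pos (by norm_num : (0:ℝ) < 16) _)) (Real.exp_pos _)
  have hCrpos : 0 < Cr := by
    rw [hCr]
    exact mul_pos hD0 (mul_pos (Real.rpow_pos_of_pos (by norm_num : (0:ℝ) < 4) _)
      (Real.rpow_pos_of_pos (div_pos pdi1 pdi2) _))
  -- pointwise bound
  have hpt : ∀ y, -1 < y → y < 1 →
      kap p (-Real.tanh ζj) y ^ α * kap p (-Real.tanh ζi) y ^ β * (1-y^2)^((α+β)/(p-1)-1)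
        ≤ Cr * ((1-y)^((β-α)/(p-1)-1) * (1+y)^(-((β-α)/(p-1))-1)) := by
    intro y hy1 hy2
    have pY : (0:ℝ) < 1 - y^2 := by nlinarith
    have h1 := pointwise_main p α β ζi ζj y hp hα hβ hy1 hy2
    have hG := G_le_r (-Real.tanh ζi) y hdi1 hdi2 hy1 hy2
    have pBi : (0:ℝ) < 1 + (-Real.tanh ζi)*y := by
      nlinarith [mul_pos pdi2 (by linarith : (0:ℝ) < 1+y), mul_pos pdi1 (by linarith : (0:ℝ) < 1-y)]
    have pAi : (0:ℝ) < 1 - (-Real.tanh ζi)^2 := by nlinarith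
    have pGi : (0:ℝ) < (1-(-Real.tanh ζi)^2) * (1-y^2) / (1+(-Real.tanh ζi)*y)^2 := by positivity
    have h2 : ((1-(-Real.tanh ζi)^2) * (1-y^2)/(1+(-Real.tanh ζi)*y)^2)^((β-α)/(p-1)) * (1-y^2)⁻¹
        ≤ (4^((β-α)/(p-1)) * ((1-(-Real.tanh ζi))/(1+(-Real.tanh ζi)))^((β-α)/(p-1)))
          * ((1-y)^((β-α)/(p-1)-1) * (1+y)^(-((β-α)/(p-1))-1)) := by
      rw [← step3 (-Real.tanh ζi) y ((β-α)/(p-1)) hγ hdi1 hdi2 hy1 hy2]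
      exact mul_le_mul_of_nonneg_right (Real.rpow_le_rpow pGi.le hG hγ.le) (by positivity)
    calc kap p (-Real.tanh ζj) y ^ α * kap p (-Real.tanh ζi) y ^ β * (1-y^2)^((α+β)/(p-1)-1)
        ≤ (kappa0 p^(α+β) * 16^(α/(p-1)) * Real.exp (-(2/(p-1))*α*|ζi-ζj|)) *
          (((1-(-Real.tanh ζi)^2) * (1-y^2)/(1+(-Real.tanh ζi)*y)^2)^((β-α)/(p-1)) * (1-y^2)⁻¹) := h1
      _ ≤ (kappa0 p^(α+β) * 16^(α/(p-1)) * Real.exp (-(2/(p-1))*α*|ζi-ζj|)) *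
          ((4^((β-α)/(p-1)) * ((1-(-Real.tanh ζi))/(1+(-Real.tanh ζi)))^((β-α)/(p-1)))
            * ((1-y)^((β-α)/(p-1)-1) * (1+y)^(-((β-α)/(p-1))-1))) :=
          mul_le_mul_of_nonneg_left h2 hD0.le
      _ = Cr * ((1-y)^((β-α)/(p-1)-1) * (1+y)^(-((β-α)/(p-1))-1)) := by rw [hCr]; ring
  have hfm : Measurable (fun y : ℝ => kap p (-Real.tanh ζj) y ^ α * kap p (-Real.tanh ζi) y ^ β
      * (1-y^2)^((α+β)/(p-1)-1)) := by
    simp only [kap]; fun_prop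
  have hnn : ∀ y : ℝ, -1 ≤ y → y ≤ 1 →
      0 ≤ kap p (-Real.tanh ζj) y ^ α * kap p (-Real.tanh ζi) y ^ β * (1-y^2)^((α+β)/(p-1)-1) := by
    intro y h1 h2
    have k1 := kap_pos p (-Real.tanh ζj) y hp hdj1 hdj2 h1 h2
    have k2 := kap_pos p (-Real.tanh ζi) y hp hdi1 hdi2 h1 h2
    have hYnn : (0:ℝ) ≤ 1 - y^2 := by nlinarith
    positivity
  have hintf : IntervalIntegrable (fun y : ℝ => kap p (-Real.tanh ζj) y ^ α * kap p (-Real.tanh ζi) y ^ β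
      * (1-y^2)^((α+β)/(p-1)-1)) MeasureTheory.volume (-(-Real.tanh ζi)) 1 := by
    apply (hφ.const_mul Cr).mono_fun' hfm.aestronglyMeasurable
    have hne : ∀ᵐ y ∂(MeasureTheory.volume.restrict (Set.uIoc (-(-Real.tanh ζi)) 1)), y ≠ (1:ℝ) := by
      apply ae_restrict_of_ae
      simp [ae_iff, measure_singleton]
    filter_upwards [hne, ae_restrict_mem measurableSet_uIoc] with y h1 h2
    rw [Set.uIoc_of_le hm2] at h2
    have hy1 : -1 < y := lt_trans hm1 h2.1
    have hy2 : y < 1 := lt_of_le_of_ne h2.2 h1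
    rw [Real.norm_eq_abs, abs_of_nonneg (hnn y hy1.le hy2.le)]
    exact hpt y hy1 hy2
  refine ⟨hintf, ?_⟩
  have haeIcc : (fun y : ℝ => kap p (-Real.tanh ζj) y ^ α * kap p (-Real.tanh ζi) y ^ β
        * (1-y^2)^((α+β)/(p-1)-1))
      ≤ᵐ[MeasureTheory.volume.restrict (Set.Icc (-(-Real.tanh ζi)) 1)]
      (fun y : ℝ => Cr * ((1-y)^((β-α)/(p-1)-1) * (1+y)^(-((β-α)/(p-1))-1))) := by
    have hne : ∀ᵐ y ∂(MeasureTheory.volume.restrict (Set.Icc (-(-Real.tanh ζi)) 1)), y ≠ (1:ℝ) := by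
      apply ae_restrict_of_ae
      simp [ae_iff, measure_singleton]
    filter_upwards [hne, ae_restrict_mem measurableSet_Icc] with y h1 h2
    have hy1 : -1 < y := lt_of_lt_of_le hm1 h2.1
    have hy2 : y < 1 := lt_of_le_of_ne h2.2 h1
    exact hpt y hy1 hy2
  calc (∫ y in (-(-Real.tanh ζi) : ℝ)..1, kap p (-Real.tanh ζj) y ^ α * kap p (-Real.tanh ζi) y ^ β
        * (1 - y ^ 2) ^ ((α + β) / (p - 1) - 1))
      ≤ ∫ y in (-(-Real.tanh ζi) : ℝ)..1, Cr * ((1-y)^((β-α)/(p-1)-1) * (1+y)^(-((β-α)/(p-1))-1)) :=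
        intervalIntegral.integral_mono_ae_restrict hm2 hintf (hφ.const_mul Cr) haeIcc
    _ = Cr * ((1/(2*((β-α)/(p-1)))) * ((1+(-Real.tanh ζi))/(1-(-Real.tanh ζi)))^((β-α)/(p-1))) := by
        rw [intervalIntegral.integral_const_mul, phi_integral (-Real.tanh ζi) ((β-α)/(p-1)) hγ hdi1 hdi2]
    _ = kappa0 p^(α+β) * 16^(α/(p-1)) * Real.exp (-(2/(p-1))*α*|ζi-ζj|)
          * 4^((β-α)/(p-1)) * (1/(2*((β-α)/(p-1)))) := by
        rw [hCr]
        have hc : ((1-(-Real.tanh ζi))/(1+(-Real.tanh ζi)))^((β-α)/(p-1))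
            * ((1+(-Real.tanh ζi))/(1-(-Real.tanh ζi)))^((β-α)/(p-1)) = 1 := by
          rw [← Real.mul_rpow (by positivity) (by positivity),
            show ((1-(-Real.tanh ζi))/(1+(-Real.tanh ζi))) * ((1+(-Real.tanh ζi))/(1-(-Real.tanh ζi))) = 1 by
              have h0 : (0:ℝ) < 1 + Real.tanh ζi := by have := neg_one_lt_tanh' ζi; linarith
              have h0' : (0:ℝ) < 1 - Real.tanh ζi := by have := tanh_lt_one' ζi; linarith
              field_simp [h0.ne', h0'.ne']]
          exact Real.one_rpow _
        linear_combination (kappa0 p^(α+β) * 16^(α/(p-1)) * Real.exp (-(2/(p-1))*α*|ζi-ζj|)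
          * 4^((β-α)/(p-1)) * (1/(2*((β-α)/(p-1))))) * hc

end SIB

namespace SIB
open Real MeasureTheory Set intervalIntegral

lemma piece_left (p α β ζi ζj : ℝ) (hp : 1 < p) (hα : 0 < α) (hβ : 0 < β) (hab : α < β) :
    IntervalIntegrable (fun y : ℝ => kap p (-Real.tanh ζj) y ^ α * kap p (-Real.tanh ζi) y ^ β
        * (1 - y ^ 2) ^ ((α + β) / (p - 1) - 1)) MeasureTheory.volume (-1) (-(-Real.tanh ζi)) ∧
    (∫ y in (-1 : ℝ)..(-(-Real.tanh ζi)), kap p (-Real.tanh ζj) y ^ α * kap p (-Real.tanh ζi) y ^ β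
        * (1 - y ^ 2) ^ ((α + β) / (p - 1) - 1))
      ≤ kappa0 p^(α+β) * 16^(α/(p-1)) * Real.exp (-(2/(p-1))*α*|ζi-ζj|)
          * 4^((β-α)/(p-1)) * (1/(2*((β-α)/(p-1)))) := by
  have hq : (0:ℝ) < p - 1 := by linarith
  have hκ := kappa0_pos p hp
  have hγ : 0 < (β-α)/(p-1) := div_pos (by linarith) hq
  have hdj1 : (-1:ℝ) < -Real.tanh ζj := by have := tanh_lt_one' ζj; linarith
  have hdj2 : -Real.tanh ζj < 1 := by have := neg_one_lt_tanh' ζj; linarith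
  have hdi1 : (-1:ℝ) < -Real.tanh ζi := by have := tanh_lt_one' ζi; linarith
  have hdi2 : -Real.tanh ζi < 1 := by have := neg_one_lt_tanh' ζi; linarith
  have pdi1 : (0:ℝ) < 1 - (-Real.tanh ζi) := by linarith
  have pdi2 : (0:ℝ) < 1 + (-Real.tanh ζi) := by linarith
  have hm1 : (-(-Real.tanh ζi):ℝ) < 1 := by linarith
  have hm2 : (-1:ℝ) ≤ -(-Real.tanh ζi) := by linarith
  have hφ := phi_intable' (-Real.tanh ζi) ((β-α)/(p-1)) hγ hdi1 hdi2
  set Cl : ℝ := kappa0 p^(α+β) * 16^(α/(p-1)) * Real.exp (-(2/(p-1))*α*|ζi-ζj|)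
      * (4^((β-α)/(p-1)) * ((1+(-Real.tanh ζi))/(1-(-Real.tanh ζi)))^((β-α)/(p-1))) with hCl
  have hD0 : (0:ℝ) < kappa0 p^(α+β) * 16^(α/(p-1)) * Real.exp (-(2/(p-1))*α*|ζi-ζj|) :=
    mul_pos (mul_pos (Real.rpow_pos_of_pos hκ _)
      (Real.rpow_pos_of_pos (by norm_num : (0:ℝ) < 16) _)) (Real.exp_pos _)
  have hpt : ∀ y, -1 < y → y < 1 →
      kap p (-Real.tanh ζj) y ^ α * kap p (-Real.tanh ζi) y ^ β * (1-y^2)^((α+β)/(p-1)-1)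
        ≤ Cl * ((1+y)^((β-α)/(p-1)-1) * (1-y)^(-((β-α)/(p-1))-1)) := by
    intro y hy1 hy2
    have pY : (0:ℝ) < 1 - y^2 := by nlinarith
    have h1 := pointwise_main p α β ζi ζj y hp hα hβ hy1 hy2
    have hG := G_le_rinv (-Real.tanh ζi) y hdi1 hdi2 hy1 hy2
    have pBi : (0:ℝ) < 1 + (-Real.tanh ζi)*y := by
      nlinarith [mul_pos pdi2 (by linarith : (0:ℝ) < 1+y), mul_pos pdi1 (by linarith : (0:ℝ) < 1-y)]
    have pAi : (0:ℝ) < 1 - (-Real.tanh ζi)^2 := by nlinarith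
    have pGi : (0:ℝ) < (1-(-Real.tanh ζi)^2) * (1-y^2) / (1+(-Real.tanh ζi)*y)^2 := by positivity
    have h2 : ((1-(-Real.tanh ζi)^2) * (1-y^2)/(1+(-Real.tanh ζi)*y)^2)^((β-α)/(p-1)) * (1-y^2)⁻¹
        ≤ (4^((β-α)/(p-1)) * ((1+(-Real.tanh ζi))/(1-(-Real.tanh ζi)))^((β-α)/(p-1)))
          * ((1+y)^((β-α)/(p-1)-1) * (1-y)^(-((β-α)/(p-1))-1)) := by
      rw [← step3' (-Real.tanh ζi) y ((β-α)/(p-1)) hγ hdi1 hdi2 hy1 hy2]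
      exact mul_le_mul_of_nonneg_right (Real.rpow_le_rpow pGi.le hG hγ.le) (by positivity)
    calc kap p (-Real.tanh ζj) y ^ α * kap p (-Real.tanh ζi) y ^ β * (1-y^2)^((α+β)/(p-1)-1)
        ≤ (kappa0 p^(α+β) * 16^(α/(p-1)) * Real.exp (-(2/(p-1))*α*|ζi-ζj|)) *
          (((1-(-Real.tanh ζi)^2) * (1-y^2)/(1+(-Real.tanh ζi)*y)^2)^((β-α)/(p-1)) * (1-y^2)⁻¹) := h1
      _ ≤ (kappa0 p^(α+β) * 16^(α/(p-1)) * Real.exp (-(2/(p-1))*α*|ζi-ζj|)) *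
          ((4^((β-α)/(p-1)) * ((1+(-Real.tanh ζi))/(1-(-Real.tanh ζi)))^((β-α)/(p-1)))
            * ((1+y)^((β-α)/(p-1)-1) * (1-y)^(-((β-α)/(p-1))-1))) :=
          mul_le_mul_of_nonneg_left h2 hD0.le
      _ = Cl * ((1+y)^((β-α)/(p-1)-1) * (1-y)^(-((β-α)/(p-1))-1)) := by rw [hCl]; ring
  have hfm : Measurable (fun y : ℝ => kap p (-Real.tanh ζj) y ^ α * kap p (-Real.tanh ζi) y ^ β
      * (1-y^2)^((α+β)/(p-1)-1)) := by
    simp only [kap]; fun_prop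
  have hnn : ∀ y : ℝ, -1 ≤ y → y ≤ 1 →
      0 ≤ kap p (-Real.tanh ζj) y ^ α * kap p (-Real.tanh ζi) y ^ β * (1-y^2)^((α+β)/(p-1)-1) := by
    intro y h1 h2
    have k1 := kap_pos p (-Real.tanh ζj) y hp hdj1 hdj2 h1 h2
    have k2 := kap_pos p (-Real.tanh ζi) y hp hdi1 hdi2 h1 h2
    have hYnn : (0:ℝ) ≤ 1 - y^2 := by nlinarith
    positivity
  have hintf : IntervalIntegrable (fun y : ℝ => kap p (-Real.tanh ζj) y ^ α * kap p (-Real.tanh ζi) y ^ β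
      * (1-y^2)^((α+β)/(p-1)-1)) MeasureTheory.volume (-1) (-(-Real.tanh ζi)) := by
    apply (hφ.const_mul Cl).mono_fun' hfm.aestronglyMeasurable
    filter_upwards [ae_restrict_mem measurableSet_uIoc] with y h2
    rw [Set.uIoc_of_le hm2] at h2
    have hy1 : -1 < y := h2.1
    have hy2 : y < 1 := lt_of_le_of_lt h2.2 hm1
    rw [Real.norm_eq_abs, abs_of_nonneg (hnn y hy1.le hy2.le)]
    exact hpt y hy1 hy2
  refine ⟨hintf, ?_⟩
  have haeIcc : (fun y : ℝ => kap p (-Real.tanh ζj) y ^ α * kap p (-Real.tanh ζi) y ^ β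
        * (1-y^2)^((α+β)/(p-1)-1))
      ≤ᵐ[MeasureTheory.volume.restrict (Set.Icc (-1 : ℝ) (-(-Real.tanh ζi)))]
      (fun y : ℝ => Cl * ((1+y)^((β-α)/(p-1)-1) * (1-y)^(-((β-α)/(p-1))-1))) := by
    have hne : ∀ᵐ y ∂(MeasureTheory.volume.restrict (Set.Icc (-1 : ℝ) (-(-Real.tanh ζi)))), y ≠ (-1:ℝ) := by
      apply ae_restrict_of_ae
      simp [ae_iff, measure_singleton]
    filter_upwards [hne, ae_restrict_mem measurableSet_Icc] with y h1 h2
    have hy1 : -1 < y := lt_of_le_of_ne h2.1 (Ne.symm h1)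
    have hy2 : y < 1 := lt_of_le_of_lt h2.2 hm1
    exact hpt y hy1 hy2
  calc (∫ y in (-1 : ℝ)..(-(-Real.tanh ζi)), kap p (-Real.tanh ζj) y ^ α * kap p (-Real.tanh ζi) y ^ β
        * (1 - y ^ 2) ^ ((α + β) / (p - 1) - 1))
      ≤ ∫ y in (-1 : ℝ)..(-(-Real.tanh ζi)), Cl * ((1+y)^((β-α)/(p-1)-1) * (1-y)^(-((β-α)/(p-1))-1)) :=
        intervalIntegral.integral_mono_ae_restrict hm2 hintf (hφ.const_mul Cl) haeIcc
    _ = Cl * ((1/(2*((β-α)/(p-1)))) * ((1-(-Real.tanh ζi))/(1+(-Real.tanh ζi)))^((β-α)/(p-1))) := by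
        rw [intervalIntegral.integral_const_mul, phi_integral' (-Real.tanh ζi) ((β-α)/(p-1)) hγ hdi1 hdi2]
    _ = kappa0 p^(α+β) * 16^(α/(p-1)) * Real.exp (-(2/(p-1))*α*|ζi-ζj|)
          * 4^((β-α)/(p-1)) * (1/(2*((β-α)/(p-1)))) := by
        rw [hCl]
        have hc : ((1+(-Real.tanh ζi))/(1-(-Real.tanh ζi)))^((β-α)/(p-1))
            * ((1-(-Real.tanh ζi))/(1+(-Real.tanh ζi)))^((β-α)/(p-1)) = 1 := by
          rw [← Real.mul_rpow (by positivity) (by positivity),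
            show ((1+(-Real.tanh ζi))/(1-(-Real.tanh ζi))) * ((1-(-Real.tanh ζi))/(1+(-Real.tanh ζi))) = 1 by
              have h0 : (0:ℝ) < 1 + Real.tanh ζi := by have := neg_one_lt_tanh' ζi; linarith
              have h0' : (0:ℝ) < 1 - Real.tanh ζi := by have := tanh_lt_one' ζi; linarith
              field_simp [h0.ne', h0'.ne']]
          exact Real.one_rpow _
        linear_combination (kappa0 p^(α+β) * 16^(α/(p-1)) * Real.exp (-(2/(p-1))*α*|ζi-ζj|)
          * 4^((β-α)/(p-1)) * (1/(2*((β-α)/(p-1))))) * hc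

lemma key (p α β : ℝ) (hp : 1 < p) (hα : 0 < α) (hβ : 0 < β) (hab : α < β) :
    ∃ C > 0, ∀ ζi ζj : ℝ,
      (∫ y in (-1 : ℝ)..1, kap p (-Real.tanh ζj) y ^ α * kap p (-Real.tanh ζi) y ^ β
          * (1 - y ^ 2) ^ ((α + β) / (p - 1) - 1))
        ≤ C * Real.exp (-(2 / (p - 1)) * α * |ζi - ζj|) := by
  have hq : (0:ℝ) < p - 1 := by linarith
  have hκ := kappa0_pos p hp
  have hγ : 0 < (β-α)/(p-1) := div_pos (by linarith) hq
  refine ⟨kappa0 p^(α+β) * 16^(α/(p-1)) * 4^((β-α)/(p-1)) / ((β-α)/(p-1)), ?_, ?_⟩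
  · apply div_pos _ hγ
    exact mul_pos (mul_pos (Real.rpow_pos_of_pos hκ _)
      (Real.rpow_pos_of_pos (by norm_num : (0:ℝ) < 16) _))
      (Real.rpow_pos_of_pos (by norm_num : (0:ℝ) < 4) _)
  intro ζi ζj
  obtain ⟨hIL, hVL⟩ := piece_left p α β ζi ζj hp hα hβ hab
  obtain ⟨hIR, hVR⟩ := piece_right p α β ζi ζj hp hα hβ hab
  rw [← intervalIntegral.integral_add_adjacent_intervals hIL hIR]
  calc (∫ y in (-1 : ℝ)..(-(-Real.tanh ζi)), kap p (-Real.tanh ζj) y ^ α * kap p (-Real.tanh ζi) y ^ β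
          * (1 - y ^ 2) ^ ((α + β) / (p - 1) - 1))
        + (∫ y in (-(-Real.tanh ζi) : ℝ)..1, kap p (-Real.tanh ζj) y ^ α * kap p (-Real.tanh ζi) y ^ β
          * (1 - y ^ 2) ^ ((α + β) / (p - 1) - 1))
      ≤ kappa0 p^(α+β) * 16^(α/(p-1)) * Real.exp (-(2/(p-1))*α*|ζi-ζj|)
          * 4^((β-α)/(p-1)) * (1/(2*((β-α)/(p-1))))
        + kappa0 p^(α+β) * 16^(α/(p-1)) * Real.exp (-(2/(p-1))*α*|ζi-ζj|)
          * 4^((β-α)/(p-1)) * (1/(2*((β-α)/(p-1)))) := add_le_add hVL hVR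
    _ = kappa0 p^(α+β) * 16^(α/(p-1)) * 4^((β-α)/(p-1)) / ((β-α)/(p-1))
          * Real.exp (-(2 / (p - 1)) * α * |ζi - ζj|) := by
        have hne : ((β-α)/(p-1)) ≠ 0 := hγ.ne'
        generalize hg : (β-α)/(p-1) = g at hne ⊢
        field_simp
        ring

end SIB


theorem soliton_interaction_bound (p α β : ℝ) (hp : 1 < p) (hα : 0 < α) (hβ : 0 < β)
    (hαβ : α ≠ β) :
    ∃ C > 0, ∀ ζi ζj : ℝ,
      (∫ y in (-1 : ℝ)..1,
          kap p (-Real.tanh ζj) y ^ α * kap p (-Real.tanh ζi) y ^ β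
            * (1 - y ^ 2) ^ ((α + β) / (p - 1) - 1))
        ≤ C * Real.exp (-(2 / (p - 1)) * min α β * |ζi - ζj|) := by
  rcases lt_or_gt_of_ne hαβ with h | h
  · obtain ⟨C, hC, hbound⟩ := SIB.key p α β hp hα hβ h
    refine ⟨C, hC, fun ζi ζj => ?_⟩
    rw [min_eq_left h.le]
    exact hbound ζi ζj
  · obtain ⟨C, hC, hbound⟩ := SIB.key p β α hp hβ hα h
    refine ⟨C, hC, fun ζi ζj => ?_⟩
    rw [min_eq_right h.le]
    have h2 := hbound ζj ζi
    calc (∫ y in (-1 : ℝ)..1, kap p (-Real.tanh ζj) y ^ α * kap p (-Real.tanh ζi) y ^ β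
            * (1 - y ^ 2) ^ ((α + β) / (p - 1) - 1))
        = ∫ y in (-1 : ℝ)..1, kap p (-Real.tanh ζi) y ^ β * kap p (-Real.tanh ζj) y ^ α
            * (1 - y ^ 2) ^ ((β + α) / (p - 1) - 1) := by
          apply intervalIntegral.integral_congr
          intro x _
          rw [add_comm β α]
          ring
      _ ≤ C * Real.exp (-(2 / (p - 1)) * β * |ζj - ζi|) := h2
      _ = C * Real.exp (-(2 / (p - 1)) * β * |ζi - ζj|) := by rw [abs_sub_comm]
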